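/- (Proposition 2(i).) Let Λ be a jointly continuous cross-impact model which is split-invariant, rotation-invariant, weakly cross-stable, and such that for every triple (Σ,Ω,R) and every linear subspace V of ℝⁿ one has ε² Λ(Σ^q_ε, Ω^q_ε, R^q_ε) → 0 as ε → 0⁺. Then Λ is semi-strongly fragmentation invariant: for every triple (Σ,Ω,R) and every nonzero linear subspace V with V ⊆ ker Σ and V ⊆ ker(Rᵀ), one has Π_V Λ(Σ,Ω,R) = 0 and Λ(Σ,Ω,R) Π_V = 0. (The condition V ⊆ ker(Rᵀ) reflects the paper's standing assumption ker Σ ⊆ ker Rᵀ.) -/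

import Mathlib

open Matrix
open scoped Classical

/-- `sqrtm A` is the unique symmetric positive semidefinite square root of a
symmetric positive semidefinite real matrix `A` (junk value `0` otherwise). -/
noncomputable def sqrtm {n : ℕ} (A : Matrix (Fin n) (Fin n) ℝ) : Matrix (Fin n) (Fin n) ℝ :=
  if h : A.PosSemidef then
    (h.1.eigenvectorUnitary : Matrix (Fin n) (Fin n) ℝ) * diagonal (fun i => Real.sqrt (h.1.eigenvalues i)) *
      (star h.1.eigenvectorUnitary : Matrix (Fin n) (Fin n) ℝ) else 0

/-- The Kyle cross-impact matrix `Λ_kyle(Σ,Ω) = (√Ω)⁻¹ √(√Ω Σ √Ω) (√Ω)⁻¹`. -/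
noncomputable def kyle {n : ℕ} (S W : Matrix (Fin n) (Fin n) ℝ) : Matrix (Fin n) (Fin n) ℝ :=
  (sqrtm W)⁻¹ * sqrtm (sqrtm W * S * sqrtm W) * (sqrtm W)⁻¹

/-- The matrix of the orthogonal projection of `ℝⁿ` (with the standard inner product)
onto the linear subspace `V`. -/
noncomputable def projMat {n : ℕ} (V : Submodule ℝ (EuclideanSpace ℝ (Fin n))) :
    Matrix (Fin n) (Fin n) ℝ :=
  LinearMap.toMatrix' ((EuclideanSpace.equiv (Fin n) ℝ).toLinearMap ∘ₗ V.subtype ∘ₗ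
    (V.orthogonalProjectionOnto).toLinearMap ∘ₗ ((EuclideanSpace.equiv (Fin n) ℝ).symm.toLinearMap))

/-- The regularizing matrix `Π̄_V + ε Π_V`. -/
noncomputable def reg {n : ℕ} (V : Submodule ℝ (EuclideanSpace ℝ (Fin n))) (ε : ℝ) :
    Matrix (Fin n) (Fin n) ℝ :=
  (1 - projMat V) + ε • projMat V

attribute [local instance] Matrix.normedAddCommGroup
attribute [local instance] Matrix.normedSpace

section Aux

variable {n : ℕ}

lemma eq_of_mulVec_eq {A B : Matrix (Fin n) (Fin n) ℝ} (h : ∀ x, A *ᵥ x = B *ᵥ x) : A = B := by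
  apply Matrix.toLin'.injective
  refine LinearMap.ext fun x => ?_
  rw [Matrix.toLin'_apply, Matrix.toLin'_apply, h]

lemma projMat_mulVec (V : Submodule ℝ (EuclideanSpace ℝ (Fin n))) (x : Fin n → ℝ) :
    projMat V *ᵥ x = EuclideanSpace.equiv (Fin n) ℝ
      ((V.orthogonalProjectionOnto ((EuclideanSpace.equiv (Fin n) ℝ).symm x) : EuclideanSpace ℝ (Fin n))) := by
  rw [projMat]
  have := Matrix.toLin'_apply (LinearMap.toMatrix' ((EuclideanSpace.equiv (Fin n) ℝ).toLinearMap ∘ₗ V.subtype ∘ₗ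
    (V.orthogonalProjectionOnto).toLinearMap ∘ₗ ((EuclideanSpace.equiv (Fin n) ℝ).symm.toLinearMap))) x
  rw [Matrix.toLin'_toMatrix'] at this
  rw [← this]
  rfl

lemma projMat_idem (V : Submodule ℝ (EuclideanSpace ℝ (Fin n))) :
    projMat V * projMat V = projMat V := by
  apply eq_of_mulVec_eq
  intro x
  rw [← Matrix.mulVec_mulVec, projMat_mulVec, projMat_mulVec]
  congr 1
  simp [Submodule.orthogonalProjectionOnto_mem_subspace_eq_self, Submodule.starProjection_eq_self_iff, Submodule.starProjection_apply_mem]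

lemma projMat_mulVec_mem (V : Submodule ℝ (EuclideanSpace ℝ (Fin n))) (x : Fin n → ℝ) :
    (EuclideanSpace.equiv (Fin n) ℝ).symm (projMat V *ᵥ x) ∈ V := by
  rw [projMat_mulVec]
  exact Submodule.coe_mem _

lemma mul_projMat_eq_zero {V : Submodule ℝ (EuclideanSpace ℝ (Fin n))}
    {A : Matrix (Fin n) (Fin n) ℝ}
    (h : ∀ v ∈ V, A.mulVec (EuclideanSpace.equiv (Fin n) ℝ v) = 0) :
    A * projMat V = 0 := by
  apply eq_of_mulVec_eq
  intro x
  rw [← Matrix.mulVec_mulVec, Matrix.zero_mulVec]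
  have hm := projMat_mulVec_mem V x
  have := h _ hm
  exact this

lemma conjT_eq_transpose (M : Matrix (Fin n) (Fin n) ℝ) : Mᴴ = Mᵀ :=
  Matrix.ext fun _ _ => star_trivial _

lemma projMat_transpose (V : Submodule ℝ (EuclideanSpace ℝ (Fin n))) :
    (projMat V)ᵀ = projMat V := by
  ext i j
  have key : ∀ a b : Fin n, projMat V a b =
      (inner ℝ ((V.orthogonalProjectionOnto (EuclideanSpace.single b 1) : EuclideanSpace ℝ (Fin n)))
        (EuclideanSpace.single a 1) : ℝ) := by
    intro a b
    have h1 : projMat V a b = (projMat V *ᵥ Pi.single b 1) a := by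
      simp [Matrix.mulVec_single]
    rw [h1, projMat_mulVec]
    rw [EuclideanSpace.inner_single_right]
    have : (EuclideanSpace.equiv (Fin n) ℝ).symm (Pi.single b 1) = EuclideanSpace.single b 1 := rfl
    rw [this]
    simp
  rw [Matrix.transpose_apply, key, key]
  rw [← Submodule.starProjection_apply, Submodule.inner_starProjection_left_eq_right, Submodule.starProjection_apply]
  exact real_inner_comm _ _

lemma posDef_conj {W B C : Matrix (Fin n) (Fin n) ℝ} (hW : W.PosDef) (h : C * B = 1) :
    (Bᴴ * W * B).PosDef := by
  refine Matrix.PosDef.of_dotProduct_mulVec_pos (Matrix.isHermitian_conjTranspose_mul_mul B hW.isHermitian) fun x hx => ?_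
  have hBx : B *ᵥ x ≠ 0 := by
    intro h0
    apply hx
    have : (C * B) *ᵥ x = C *ᵥ (B *ᵥ x) := (Matrix.mulVec_mulVec _ _ _).symm
    rw [h, h0, Matrix.one_mulVec, Matrix.mulVec_zero] at this
    exact this
  simpa only [Matrix.star_mulVec, Matrix.dotProduct_mulVec, Matrix.vecMul_vecMul]
    using hW.dotProduct_mulVec_pos hBx

lemma projMat_isHermitian (V : Submodule ℝ (EuclideanSpace ℝ (Fin n))) :
    (projMat V).IsHermitian := by
  rw [Matrix.IsHermitian, conjT_eq_transpose, projMat_transpose]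

noncomputable def evalsP (V : Submodule ℝ (EuclideanSpace ℝ (Fin n))) : Fin n → ℝ :=
  (projMat_isHermitian V).eigenvalues

noncomputable def OmatP (V : Submodule ℝ (EuclideanSpace ℝ (Fin n))) : Matrix (Fin n) (Fin n) ℝ :=
  ((projMat_isHermitian V).eigenvectorUnitary : Matrix (Fin n) (Fin n) ℝ)

lemma OmatP_mul_transpose (V : Submodule ℝ (EuclideanSpace ℝ (Fin n))) :
    OmatP V * (OmatP V)ᵀ = 1 := by
  rw [← conjT_eq_transpose]
  exact Matrix.mem_unitaryGroup_iff.mp ((projMat_isHermitian V).eigenvectorUnitary).2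

lemma transpose_mul_OmatP (V : Submodule ℝ (EuclideanSpace ℝ (Fin n))) :
    (OmatP V)ᵀ * OmatP V = 1 := by
  rw [← conjT_eq_transpose]
  exact Matrix.mem_unitaryGroup_iff'.mp ((projMat_isHermitian V).eigenvectorUnitary).2

lemma projMat_spec (V : Submodule ℝ (EuclideanSpace ℝ (Fin n))) :
    projMat V = OmatP V * Matrix.diagonal (evalsP V) * (OmatP V)ᵀ := by
  have h := (projMat_isHermitian V).spectral_theorem
  rw [← conjT_eq_transpose]
  simpa [evalsP, OmatP, Function.comp, Matrix.star_eq_conjTranspose] using h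

lemma evalsP_idem (V : Submodule ℝ (EuclideanSpace ℝ (Fin n))) (i : Fin n) :
    evalsP V i * evalsP V i = evalsP V i := by
  set b := (projMat_isHermitian V).eigenvectorBasis with hb
  have h := (projMat_isHermitian V).mulVec_eigenvectorBasis i
  have h2 : projMat V *ᵥ (projMat V *ᵥ ⇑(b i)) = projMat V *ᵥ ⇑(b i) := by
    rw [Matrix.mulVec_mulVec, projMat_idem]
  rw [h, Matrix.mulVec_smul, h, smul_smul] at h2
  have hu : ⇑(b i) ≠ 0 := by
    intro h0
    have : b i = 0 := by
      ext j
      exact congrFun h0 j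
    exact b.orthonormal.ne_zero i this
  exact smul_left_injective ℝ hu h2

lemma evalsP_mem (V : Submodule ℝ (EuclideanSpace ℝ (Fin n))) (i : Fin n) :
    evalsP V i = 0 ∨ evalsP V i = 1 := by
  have h := evalsP_idem V i
  have : evalsP V i * (evalsP V i - 1) = 0 := by ring_nf; linarith [h]
  rcases mul_eq_zero.mp this with h1 | h1
  · exact Or.inl h1
  · exact Or.inr (by linarith)

lemma reg_eq' (V : Submodule ℝ (EuclideanSpace ℝ (Fin n))) (ε : ℝ) :
    reg V ε = 1 + (ε - 1) • projMat V := by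
  rw [reg, sub_smul, one_smul]
  abel

lemma reg_spec (V : Submodule ℝ (EuclideanSpace ℝ (Fin n))) (ε : ℝ) :
    reg V ε = OmatP V * Matrix.diagonal (fun i => 1 + (ε - 1) * evalsP V i) * (OmatP V)ᵀ := by
  have hd : (Matrix.diagonal fun i => 1 + (ε - 1) * evalsP V i)
      = 1 + (ε - 1) • Matrix.diagonal (evalsP V) := by
    ext i j
    by_cases h : i = j <;> simp [Matrix.diagonal, h, Matrix.one_apply]
  rw [reg_eq', hd, Matrix.mul_add, Matrix.add_mul, Matrix.mul_smul, Matrix.smul_mul,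
    Matrix.mul_one]
  rw [OmatP_mul_transpose, ← projMat_spec]

end Aux

/-- Proposition 2(i): a jointly continuous, split- and rotation-invariant,
weakly cross-stable cross-impact model satisfying the regularity condition is
semi-strongly fragmentation invariant. -/
theorem weakCrossStability_implies_semiStrongFragmentation {n : ℕ}
    (Λ : Matrix (Fin n) (Fin n) ℝ → Matrix (Fin n) (Fin n) ℝ → Matrix (Fin n) (Fin n) ℝ → Matrix (Fin n) (Fin n) ℝ)
    (hcont : ContinuousOn
      (fun p : Matrix (Fin n) (Fin n) ℝ × Matrix (Fin n) (Fin n) ℝ × Matrix (Fin n) (Fin n) ℝ => Λ p.1 p.2.1 p.2.2)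
      {p : Matrix (Fin n) (Fin n) ℝ × Matrix (Fin n) (Fin n) ℝ × Matrix (Fin n) (Fin n) ℝ | p.1.PosSemidef ∧ p.2.1.PosDef})
    (hsplit : ∀ S W R : Matrix (Fin n) (Fin n) ℝ, S.PosSemidef → W.PosDef → ∀ d : Fin n → ℝ, (∀ i, 0 < d i) →
      Λ ((diagonal d)⁻¹ * S * (diagonal d)⁻¹) (diagonal d * W * diagonal d)
        ((diagonal d)⁻¹ * R * diagonal d)
        = (diagonal d)⁻¹ * Λ S W R * (diagonal d)⁻¹)
    (hrot : ∀ S W R : Matrix (Fin n) (Fin n) ℝ, S.PosSemidef → W.PosDef → ∀ O : Matrix (Fin n) (Fin n) ℝ, O * Oᵀ = 1 →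
      Λ (O * S * Oᵀ) (O * W * Oᵀ) (O * R * Oᵀ) = O * Λ S W R * Oᵀ)
    (hwcs : ∀ S W R : Matrix (Fin n) (Fin n) ℝ, S.PosSemidef → W.PosDef →
      ∀ V : Submodule ℝ (EuclideanSpace ℝ (Fin n)), ∃ C : ℝ,
        ∀ᶠ ε in nhdsWithin (0 : ℝ) (Set.Ioi 0),
          ‖(1 - projMat V) * Λ S (reg V ε * W * reg V ε) (R * reg V ε) * projMat V‖ ≤ C ∧
          ‖projMat V * Λ S (reg V ε * W * reg V ε) (R * reg V ε) * (1 - projMat V)‖ ≤ C)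
    (hreg : ∀ S W R : Matrix (Fin n) (Fin n) ℝ, S.PosSemidef → W.PosDef →
      ∀ V : Submodule ℝ (EuclideanSpace ℝ (Fin n)),
        Filter.Tendsto (fun ε : ℝ => (ε ^ 2) • Λ S (reg V ε * W * reg V ε) (R * reg V ε))
          (nhdsWithin 0 (Set.Ioi 0)) (nhds 0)) :
    ∀ S W R : Matrix (Fin n) (Fin n) ℝ, S.PosSemidef → W.PosDef →
      ∀ V : Submodule ℝ (EuclideanSpace ℝ (Fin n)), V ≠ ⊥ →
      (∀ v ∈ V, S.mulVec (EuclideanSpace.equiv (Fin n) ℝ v) = 0) →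
      (∀ v ∈ V, Rᵀ.mulVec (EuclideanSpace.equiv (Fin n) ℝ v) = 0) →
      projMat V * Λ S W R = 0 ∧ Λ S W R * projMat V = 0 := by
  intro S W R hS hW V hVne hSV hRV
  clear hcont hVne
  set P := projMat V with hPdef
  set A := Λ S W R with hAdef
  have hPP : P * P = P := projMat_idem V
  have hPt : Pᵀ = P := projMat_transpose V
  have hSsymm : Sᵀ = S := by rw [← conjT_eq_transpose]; exact hS.1
  have hSP : S * P = 0 := mul_projMat_eq_zero hSV
  have hPS : P * S = 0 := by
    have h := congrArg Matrix.transpose hSP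
    simpa [Matrix.transpose_mul, hPt, hSsymm] using h
  have hRtP : Rᵀ * P = 0 := mul_projMat_eq_zero hRV
  have hPR : P * R = 0 := by
    have h := congrArg Matrix.transpose hRtP
    simpa [Matrix.transpose_mul, hPt] using h
  -- algebraic facts about reg
  have hregP : ∀ c : ℝ, reg V c * P = c • P := by
    intro c
    rw [reg, Matrix.add_mul, Matrix.sub_mul, Matrix.smul_mul, hPP, Matrix.one_mul]
    simp
  have hPreg : ∀ c : ℝ, P * reg V c = c • P := by
    intro c
    rw [reg, Matrix.mul_add, Matrix.mul_sub, Matrix.mul_smul, hPP, Matrix.mul_one]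
    simp
  have hQreg : ∀ c : ℝ, (1 - P) * reg V c = 1 - P := by
    intro c
    rw [Matrix.sub_mul, Matrix.one_mul, hPreg, reg_eq', ← hPdef, sub_smul, one_smul]
    abel
  have hregQ : ∀ c : ℝ, reg V c * (1 - P) = 1 - P := by
    intro c
    rw [Matrix.mul_sub, Matrix.mul_one, hregP, reg_eq', ← hPdef, sub_smul, one_smul]
    abel
  have hregS : ∀ c : ℝ, reg V c * S = S := by
    intro c
    rw [reg, Matrix.add_mul, Matrix.sub_mul, Matrix.smul_mul, hPS, Matrix.one_mul]
    simp
  have hSreg : ∀ c : ℝ, S * reg V c = S := by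
    intro c
    rw [reg, Matrix.mul_add, Matrix.mul_sub, Matrix.mul_smul, hSP, Matrix.mul_one]
    simp
  have hregR : ∀ c : ℝ, reg V c * R = R := by
    intro c
    rw [reg, Matrix.add_mul, Matrix.sub_mul, Matrix.smul_mul, hPR, Matrix.one_mul]
    simp
  -- the key identity
  have main : ∀ ε : ℝ, 0 < ε →
      Λ S (reg V ε * W * reg V ε) (R * reg V ε) = reg V ε⁻¹ * A * reg V ε⁻¹ := by
    intro ε hε
    have hεne : ε ≠ 0 := ne_of_gt hε
    set O := OmatP V with hO
    set l := evalsP V with hl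
    set d : Fin n → ℝ := fun i => 1 + (ε - 1) * l i with hd
    set d' : Fin n → ℝ := fun i => 1 + (ε⁻¹ - 1) * l i with hd'
    have hl01 := evalsP_mem V
    have hd_pos : ∀ i, 0 < d i := by
      intro i
      simp only [hd]
      rcases hl01 i with h | h <;> rw [hl, h] <;> nlinarith
    have hdd' : ∀ i, d i * d' i = 1 := by
      intro i
      simp only [hd, hd']
      rcases hl01 i with h | h <;> rw [hl, h]
      · ring
      · field_simp; ring
    have hDinv : (Matrix.diagonal d)⁻¹ = Matrix.diagonal d' := by
      apply Matrix.inv_eq_right_inv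
      rw [Matrix.diagonal_mul_diagonal]
      have : (fun i => d i * d' i) = fun _ => (1 : ℝ) := funext hdd'
      rw [this, Matrix.diagonal_one]
    have hregd : reg V ε = O * Matrix.diagonal d * Oᵀ := reg_spec V ε
    have hregd' : reg V ε⁻¹ = O * Matrix.diagonal d' * Oᵀ := reg_spec V ε⁻¹
    have hOO : O * Oᵀ = 1 := OmatP_mul_transpose V
    have hOO' : Oᵀ * O = 1 := transpose_mul_OmatP V
    have hS' : (Oᵀ * S * O).PosSemidef := by
      have h := hS.conjTranspose_mul_mul_same O
      rwa [conjT_eq_transpose] at h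
    have hW' : (Oᵀ * W * O).PosDef := by
      have h := posDef_conj hW hOO'
      rwa [conjT_eq_transpose] at h
    have hA' : Λ (Oᵀ * S * O) (Oᵀ * W * O) (Oᵀ * R * O) = Oᵀ * A * O := by
      have h := hrot S W R hS hW Oᵀ (by rwa [Matrix.transpose_transpose])
      simpa [Matrix.transpose_transpose] using h
    have hsp := hsplit (Oᵀ * S * O) (Oᵀ * W * O) (Oᵀ * R * O) hS' hW' d hd_pos
    rw [hDinv, hA'] at hsp
    have hS'' : (Matrix.diagonal d' * (Oᵀ * S * O) * Matrix.diagonal d').PosSemidef := by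
      have h := hS'.mul_mul_conjTranspose_same (Matrix.diagonal d')
      rwa [conjT_eq_transpose, Matrix.diagonal_transpose] at h
    have hW'' : (Matrix.diagonal d * (Oᵀ * W * O) * Matrix.diagonal d).PosDef := by
      have hCB : Matrix.diagonal d' * Matrix.diagonal d = 1 := by
        rw [Matrix.diagonal_mul_diagonal]
        have : (fun i => d' i * d i) = fun _ => (1 : ℝ) := funext fun i => by
          rw [mul_comm]; exact hdd' i
        rw [this, Matrix.diagonal_one]
      have h := posDef_conj hW' hCB
      rwa [conjT_eq_transpose, Matrix.diagonal_transpose] at h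
    have h2 := hrot _ _ (Matrix.diagonal d' * (Oᵀ * R * O) * Matrix.diagonal d) hS'' hW'' O hOO
    rw [hsp] at h2
    have e1 : O * (Matrix.diagonal d' * (Oᵀ * S * O) * Matrix.diagonal d') * Oᵀ
        = reg V ε⁻¹ * S * reg V ε⁻¹ := by
      rw [hregd']; simp only [Matrix.mul_assoc]
    have e2 : O * (Matrix.diagonal d * (Oᵀ * W * O) * Matrix.diagonal d) * Oᵀ
        = reg V ε * W * reg V ε := by
      rw [hregd]; simp only [Matrix.mul_assoc]
    have e3 : O * (Matrix.diagonal d' * (Oᵀ * R * O) * Matrix.diagonal d) * Oᵀ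
        = reg V ε⁻¹ * R * reg V ε := by
      rw [hregd', hregd]; simp only [Matrix.mul_assoc]
    have e4 : O * (Matrix.diagonal d' * (Oᵀ * A * O) * Matrix.diagonal d') * Oᵀ
        = reg V ε⁻¹ * A * reg V ε⁻¹ := by
      rw [hregd']; simp only [Matrix.mul_assoc]
    rw [e1, e2, e3, e4] at h2
    rw [hregS, hSreg] at h2
    have : reg V ε⁻¹ * R * reg V ε = R * reg V ε := by
      rw [hregR]
    rw [this] at h2
    exact h2
  -- Step 1: P * A * P = 0
  have hPAP : P * A * P = 0 := by
    have h0 := hreg S W R hS hW V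
    have heq : ∀ᶠ ε in nhdsWithin (0:ℝ) (Set.Ioi 0),
        (ε ^ 2) • Λ S (reg V ε * W * reg V ε) (R * reg V ε)
          = (ε • (1 - P) + P) * A * (ε • (1 - P) + P) := by
      filter_upwards [self_mem_nhdsWithin] with ε hε
      have hε' : (0:ℝ) < ε := hε
      rw [main ε hε']
      have hεN : ε • reg V ε⁻¹ = ε • (1 - P) + P := by
        rw [reg, smul_add, smul_smul, mul_inv_cancel₀ (ne_of_gt hε'), one_smul]
      rw [← hεN]
      rw [Matrix.smul_mul, Matrix.smul_mul, Matrix.mul_smul, smul_smul, sq]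
    have hcontf : Filter.Tendsto (fun ε : ℝ => (ε • (1 - P) + P) * A * (ε • (1 - P) + P))
        (nhdsWithin (0:ℝ) (Set.Ioi 0)) (nhds (P * A * P)) := by
      have hc : Continuous fun ε : ℝ => (ε • (1 - P) + P) * A * (ε • (1 - P) + P) := by
        apply Continuous.matrix_mul
        apply Continuous.matrix_mul
        · exact (continuous_id.smul continuous_const).add continuous_const
        · exact continuous_const
        · exact (continuous_id.smul continuous_const).add continuous_const
      have h := hc.tendsto 0
      simp only [zero_smul, zero_add] at h
      exact h.mono_left nhdsWithin_le_nhds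
    rw [Filter.tendsto_congr' heq] at h0
    exact (tendsto_nhds_unique hcontf h0)
  -- Step 2: (1-P) * A * P = 0 and P * A * (1-P) = 0
  obtain ⟨C, hC⟩ := hwcs S W R hS hW V
  have hbound : ∀ᶠ ε in nhdsWithin (0:ℝ) (Set.Ioi 0),
      ‖(1 - P) * A * P‖ ≤ C * ε ∧ ‖P * A * (1 - P)‖ ≤ C * ε := by
    filter_upwards [hC, self_mem_nhdsWithin] with ε h1 hε
    have hε' : (0:ℝ) < ε := hε
    obtain ⟨hb1, hb2⟩ := h1
    rw [main ε hε'] at hb1 hb2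
    have key1 : (1 - P) * (reg V ε⁻¹ * A * reg V ε⁻¹) * P = ε⁻¹ • ((1 - P) * A * P) := by
      calc (1 - P) * (reg V ε⁻¹ * A * reg V ε⁻¹) * P
          = ((1 - P) * reg V ε⁻¹) * A * (reg V ε⁻¹ * P) := by
            simp only [Matrix.mul_assoc]
        _ = (1 - P) * A * (ε⁻¹ • P) := by rw [hQreg, hregP]
        _ = ε⁻¹ • ((1 - P) * A * P) := by rw [Matrix.mul_smul]
    have key2 : P * (reg V ε⁻¹ * A * reg V ε⁻¹) * (1 - P) = ε⁻¹ • (P * A * (1 - P)) := by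
      calc P * (reg V ε⁻¹ * A * reg V ε⁻¹) * (1 - P)
          = (P * reg V ε⁻¹) * A * (reg V ε⁻¹ * (1 - P)) := by
            simp only [Matrix.mul_assoc]
        _ = (ε⁻¹ • P) * A * (1 - P) := by rw [hPreg, hregQ]
        _ = ε⁻¹ • (P * A * (1 - P)) := by rw [Matrix.smul_mul, Matrix.smul_mul]
    rw [key1, norm_smul] at hb1
    rw [key2, norm_smul] at hb2
    have hinv : ‖(ε⁻¹ : ℝ)‖ = ε⁻¹ := by
      rw [Real.norm_eq_abs, abs_of_pos (inv_pos.mpr hε')]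
    rw [hinv] at hb1 hb2
    constructor
    · have := mul_le_mul_of_nonneg_left hb1 (le_of_lt hε')
      rw [← mul_assoc, mul_inv_cancel₀ (ne_of_gt hε'), one_mul] at this
      linarith [this]
    · have := mul_le_mul_of_nonneg_left hb2 (le_of_lt hε')
      rw [← mul_assoc, mul_inv_cancel₀ (ne_of_gt hε'), one_mul] at this
      linarith [this]
  have hlim : Filter.Tendsto (fun ε : ℝ => C * ε) (nhdsWithin (0:ℝ) (Set.Ioi 0)) (nhds 0) := by
    have h : Filter.Tendsto (fun ε : ℝ => C * ε) (nhds 0) (nhds (C * 0)) :=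
      (continuous_const.mul continuous_id).tendsto 0
    rw [mul_zero] at h
    exact h.mono_left nhdsWithin_le_nhds
  have hQAP : (1 - P) * A * P = 0 := by
    have h1 : ‖(1 - P) * A * P‖ ≤ 0 :=
      ge_of_tendsto hlim (hbound.mono fun ε h => h.1)
    exact norm_le_zero_iff.mp h1
  have hPAQ : P * A * (1 - P) = 0 := by
    have h1 : ‖P * A * (1 - P)‖ ≤ 0 :=
      ge_of_tendsto hlim (hbound.mono fun ε h => h.2)
    exact norm_le_zero_iff.mp h1
  constructor
  · have h : P * A = P * A * P + P * A * (1 - P) := by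
      rw [← Matrix.mul_add, add_sub_cancel, Matrix.mul_one]
    rw [h, hPAP, hPAQ, add_zero]
  · have h : A * P = P * A * P + (1 - P) * A * P := by
      rw [← Matrix.add_mul, ← Matrix.add_mul, add_sub_cancel, Matrix.one_mul]
    rw [h, hPAP, hQAP, add_zero]
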